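/- arXiv:1806.00120 — 2 statements merged into one kernel-verified Lean document; each statement's English description precedes it below -/
import Mathlib

section
/- Let 0 < γ < 1, and consider the relaxed discrete energy F[Q] = Σ_{(i,j)∈I, i<j} (γ+1)|Q_{ij}|^{2γ/(γ+1)}·L_{ij} on a finite connected graph with edge lengths L_{ij} > 0, constrained by the local mass conservation Σ_{j∈N(i)} Q_{ij} = S_i at each vertex i (with Q_{ji} = −Q_{ij}). If Q is a global minimizer of F subject to this constraint, then Q contains no loop of nonzero fluxes: there is no cyclic sequence of distinct vertices i₁,...,i_K with edges (i₁,i₂),...,(i_K,i₁) ∈ I all carrying nonzero flux. -/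
open Finset

lemma concKey13 (α x s : ℝ) (hα0 : 0 < α) (hα1 : α < 1) (hs0 : s ≠ 0) (hs : |s| < |x|) :
    |x + s| ^ α + |x - s| ^ α < 2 * |x| ^ α := by
  have hx : (0:ℝ) < |x| := lt_of_le_of_lt (abs_nonneg s) hs
  have hx0 : x ≠ 0 := by simpa [abs_pos] using hx
  have hss : -x < s ∧ s < x ∨ -(-x) < s ∧ s < -x := by
    rcases lt_or_gt_of_ne hx0 with h | h
    · right
      constructor <;> [nlinarith [abs_lt.mp (by rwa [abs_of_neg h] at hs)];
        nlinarith [abs_lt.mp (by rwa [abs_of_neg h] at hs)]]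
    · left
      exact abs_lt.mp (by rwa [abs_of_pos h] at hs)
  have key : |x + s| + |x - s| = 2 * |x| ∧ |x + s| ≠ |x - s| := by
    rcases hss with ⟨h1, h2⟩ | ⟨h1, h2⟩
    · have hxpos : 0 < x := by linarith
      rw [abs_of_pos (by linarith : (0:ℝ) < x + s), abs_of_pos (by linarith : (0:ℝ) < x - s),
        abs_of_pos hxpos]
      constructor
      · ring
      · intro h; apply hs0; linarith
    · have hxneg : x < 0 := by linarith
      rw [abs_of_neg (by linarith : x + s < 0), abs_of_neg (by linarith : x - s < 0),
        abs_of_neg hxneg]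
      constructor
      · ring
      · intro h; apply hs0; linarith
  have sc := (Real.strictConcaveOn_rpow hα0 hα1).2
    (Set.mem_Ici.mpr (abs_nonneg (x + s))) (Set.mem_Ici.mpr (abs_nonneg (x - s)))
    key.2 (by norm_num : (0:ℝ) < 1/2) (by norm_num : (0:ℝ) < 1/2) (by norm_num)
  simp only [smul_eq_mul] at sc
  have hmid : (1/2) * |x + s| + (1/2) * |x - s| = |x| := by linarith [key.1]
  rw [hmid] at sc
  linarith


/-- For `0 < γ < 1`, a global minimizer of the relaxed discrete energy
`F[Q] = (1/2)·Σ_{i,j} (γ+1)|Q_{ij}|^(2γ/(γ+1))·L_{ij}` subject to local mass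
conservation contains no loop of nonzero fluxes. -/
theorem stmt13 {V : Type*} [Fintype V] [DecidableEq V]
    (G : SimpleGraph V) [DecidableRel G.Adj] (hG : G.Connected)
    (γ : ℝ) (hγ0 : 0 < γ) (hγ1 : γ < 1)
    (L : V → V → ℝ) (hLsym : ∀ i j, L i j = L j i) (hLpos : ∀ i j, G.Adj i j → 0 < L i j)
    (S : V → ℝ) (hS : ∑ i, S i = 0)
    (Q : V → V → ℝ)
    (hQa : ∀ i j, Q i j = -Q j i)
    (hQsupp : ∀ i j, ¬ G.Adj i j → Q i j = 0)
    (hcons : ∀ i, ∑ j, Q i j = S i)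
    (hmin : ∀ Q' : V → V → ℝ, (∀ i j, Q' i j = -Q' j i) →
      (∀ i j, ¬ G.Adj i j → Q' i j = 0) → (∀ i, ∑ j, Q' i j = S i) →
      (1 / 2) * ∑ i, ∑ j, (γ + 1) * |Q i j| ^ (2 * γ / (γ + 1)) * L i j ≤
        (1 / 2) * ∑ i, ∑ j, (γ + 1) * |Q' i j| ^ (2 * γ / (γ + 1)) * L i j) :
    ¬ ∃ (K : ℕ) (v : ℕ → V), 3 ≤ K ∧
      (∀ k l, k < K → l < K → v k = v l → k = l) ∧ v K = v 0 ∧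
      ∀ k, k < K → G.Adj (v k) (v (k + 1)) ∧ Q (v k) (v (k + 1)) ≠ 0 := by
  rintro ⟨K, v, hK3, hinj, hvK, hcyc⟩
  classical
  set α := 2 * γ / (γ + 1) with hαdef
  have hα0 : 0 < α := by rw [hαdef]; positivity
  have hα1 : α < 1 := by
    rw [hαdef, div_lt_one (by linarith)]; linarith
  set A : V → V → ℝ :=
    fun i j => ∑ k ∈ Finset.range K, if i = v k ∧ j = v (k + 1) then (1:ℝ) else 0 with hAdef
  set C : V → V → ℝ := fun i j => A i j - A j i with hCdef
  -- A takes values in {0,1}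
  have hA01 : ∀ i j, A i j = 0 ∨ A i j = 1 := by
    intro i j
    simp only [hAdef]
    rw [Finset.sum_boole]
    have hcard : ((Finset.range K).filter fun k => i = v k ∧ j = v (k + 1)).card ≤ 1 := by
      apply Finset.card_le_one.mpr
      intro a ha b hb
      simp only [Finset.mem_filter, Finset.mem_range] at ha hb
      exact hinj a b ha.1 hb.1 (ha.2.1.symm.trans hb.2.1)
    rcases Nat.le_one_iff_eq_zero_or_eq_one.mp hcard with h | h <;> simp [h]
  have hArep : ∀ i j, A i j ≠ 0 → ∃ k, k < K ∧ i = v k ∧ j = v (k + 1) := by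
    intro i j h
    simp only [hAdef] at h
    obtain ⟨k, hk, hne⟩ := Finset.exists_ne_zero_of_sum_ne_zero h
    refine ⟨k, Finset.mem_range.mp hk, ?_⟩
    by_contra hc; exact hne (if_neg hc)
  have hCanti : ∀ i j, C i j = -C j i := by
    intro i j; simp only [hCdef]; ring
  have hKne : (Finset.range K).Nonempty := ⟨0, Finset.mem_range.mpr (by omega)⟩
  set m := (Finset.range K).inf' hKne (fun k => |Q (v k) (v (k + 1))|) with hmdef
  have hm : 0 < m := by
    rw [hmdef, Finset.lt_inf'_iff]
    intro k hk
    exact abs_pos.mpr (hcyc k (Finset.mem_range.mp hk)).2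
  have hedge : ∀ i j, C i j ≠ 0 → G.Adj i j ∧ m ≤ |Q i j| := by
    intro i j h
    have hAB : A i j ≠ 0 ∨ A j i ≠ 0 := by
      by_contra hc
      push_neg at hc
      apply h
      simp only [hCdef]
      rw [hc.1, hc.2]; ring
    rcases hAB with h' | h'
    · obtain ⟨k, hk, hik, hjk⟩ := hArep i j h'
      subst hik; subst hjk
      exact ⟨(hcyc k hk).1, Finset.inf'_le _ (Finset.mem_range.mpr hk)⟩
    · obtain ⟨k, hk, hik, hjk⟩ := hArep j i h'
      subst hik; subst hjk
      refine ⟨((hcyc k hk).1).symm, ?_⟩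
      rw [hQa, abs_neg]
      exact Finset.inf'_le _ (Finset.mem_range.mpr hk)
  have hCbnd : ∀ i j, |C i j| ≤ 1 := by
    intro i j
    rcases hA01 i j with h1 | h1 <;> rcases hA01 j i with h2 | h2 <;>
      (simp only [hCdef]; rw [h1, h2]) <;> norm_num
  -- conservation of C
  have hCsum : ∀ i, ∑ j, C i j = 0 := by
    intro i
    have hA1 : (∑ j, A i j) = ∑ k ∈ Finset.range K, if i = v k then (1:ℝ) else 0 := by
      simp only [hAdef]
      rw [Finset.sum_comm]
      refine Finset.sum_congr rfl fun k _ => ?_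
      by_cases h : i = v k
      · simp [h, Finset.sum_ite_eq', Finset.sum_ite_eq]
      · simp [h]
    have hA2 : (∑ j, A j i) = ∑ k ∈ Finset.range K, if i = v (k + 1) then (1:ℝ) else 0 := by
      simp only [hAdef]
      rw [Finset.sum_comm]
      refine Finset.sum_congr rfl fun k _ => ?_
      by_cases h : i = v (k + 1)
      · simp [h, Finset.sum_ite_eq', Finset.sum_ite_eq]
      · simp [h]
    have : ∑ j, C i j = (∑ j, A i j) - (∑ j, A j i) := by
      simp only [hCdef]; rw [Finset.sum_sub_distrib]
    rw [this, hA1, hA2, ← Finset.sum_sub_distrib,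
      Finset.sum_range_sub' (fun k => if i = v k then (1:ℝ) else 0) K, hvK]
    ring
  -- value on the first edge
  have hA01v : A (v 0) (v 1) = 1 := by
    simp only [hAdef]
    rw [Finset.sum_eq_single 0]
    · simp
    · intro k hk hk0
      apply if_neg
      rintro ⟨h1, h2⟩
      exact hk0 ((hinj 0 k (by omega) (Finset.mem_range.mp hk) h1)).symm
    · intro h; exact absurd (Finset.mem_range.mpr (by omega)) h
  have hA10v : A (v 1) (v 0) = 0 := by
    simp only [hAdef]
    apply Finset.sum_eq_zero
    intro k hk
    apply if_neg
    rintro ⟨h1, h2⟩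
    have hk' := Finset.mem_range.mp hk
    have hk1 : 1 = k := hinj 1 k (by omega) hk' h1
    subst hk1
    have h02 := hinj 0 2 (by omega) (by omega) h2
    omega
  have hCv : C (v 0) (v 1) = 1 := by
    simp only [hCdef]; rw [hA01v, hA10v]; ring
  -- the perturbation parameter
  set t := m / 2 with htdef
  have ht : 0 < t := by rw [htdef]; linarith
  -- perturbed flows satisfy the constraints
  have hmin' : ∀ s : ℝ,
      (1 / 2) * ∑ i, ∑ j, (γ + 1) * |Q i j| ^ α * L i j ≤
        (1 / 2) * ∑ i, ∑ j, (γ + 1) * |Q i j + s * C i j| ^ α * L i j := by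
    intro s
    have := hmin (fun i j => Q i j + s * C i j) ?_ ?_ ?_
    · simpa using this
    · intro i j
      have h1 := hQa i j
      have h2 := hCanti i j
      rw [h1, h2]; ring
    · intro i j h
      have h1 := hQsupp i j h
      have h2 : C i j = 0 := by
        by_contra hc; exact h (hedge i j hc).1
      rw [h1, h2]; ring
    · intro i
      rw [Finset.sum_add_distrib, hcons i, ← Finset.mul_sum, hCsum i]
      ring
  -- pointwise strict concavity on cycle edges
  have hterm' : ∀ i j, C i j ≠ 0 →
      (γ + 1) * |Q i j + t * C i j| ^ α * L i j +
        (γ + 1) * |Q i j + (-t) * C i j| ^ α * L i j <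
      2 * ((γ + 1) * |Q i j| ^ α * L i j) := by
    intro i j hC
    obtain ⟨hadj, hge⟩ := hedge i j hC
    have hLp := hLpos i j hadj
    have hcb := hCbnd i j
    have hs0 : t * C i j ≠ 0 := mul_ne_zero (ne_of_gt ht) hC
    have habs : |t * C i j| < |Q i j| := by
      rw [abs_mul, abs_of_pos ht]
      calc t * |C i j| ≤ t * 1 := by nlinarith
        _ < m := by rw [htdef]; linarith
        _ ≤ |Q i j| := hge
    have hkey := concKey13 α (Q i j) (t * C i j) hα0 hα1 hs0 habs
    have he : Q i j + (-t) * C i j = Q i j - t * C i j := by ring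
    rw [he]
    have hpos : 0 < (γ + 1) * L i j := mul_pos (by linarith) hLp
    nlinarith [mul_lt_mul_of_pos_right hkey hpos]
  have hterm : ∀ i j,
      (γ + 1) * |Q i j + t * C i j| ^ α * L i j +
        (γ + 1) * |Q i j + (-t) * C i j| ^ α * L i j ≤
      2 * ((γ + 1) * |Q i j| ^ α * L i j) := by
    intro i j
    by_cases hC : C i j = 0
    · rw [hC]
      apply le_of_eq
      ring_nf
    · exact (hterm' i j hC).le
  have hsum : (∑ i, ∑ j, (γ + 1) * |Q i j + t * C i j| ^ α * L i j) +
      (∑ i, ∑ j, (γ + 1) * |Q i j + (-t) * C i j| ^ α * L i j) <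
      2 * ∑ i, ∑ j, (γ + 1) * |Q i j| ^ α * L i j := by
    rw [← Finset.sum_add_distrib, Finset.mul_sum]
    apply Finset.sum_lt_sum
    · intro i _
      rw [← Finset.sum_add_distrib, Finset.mul_sum]
      exact Finset.sum_le_sum fun j _ => hterm i j
    · refine ⟨v 0, Finset.mem_univ _, ?_⟩
      rw [← Finset.sum_add_distrib, Finset.mul_sum]
      exact Finset.sum_lt_sum (fun j _ => hterm (v 0) j)
        ⟨v 1, Finset.mem_univ _, hterm' (v 0) (v 1) (by rw [hCv]; norm_num)⟩
  have h1 := hmin' t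
  have h2 := hmin' (-t)
  linarith
end

section
/- Let C be a finite nonnegative measure and Q a finite signed measure on a measurable space X, with Q absolutely continuous with respect to C and density u = dQ/dC. Then for c₀ > 0, the extended energy Ẽ[C,Q] := sup{∫(2c₀²a + 1)dC + ∫b dQ : (a,b) measurable bounded with a + b²/2 ≤ 0 pointwise} satisfies the lower bound Ẽ[C,Q] ≥ (1/2)|C|(X) + (1/(√2·c₀))|Q|(X), where |·| denotes total variation. -/
open MeasureTheory

lemma measurable_realSign : Measurable Real.sign := by
  unfold Real.sign
  exact Measurable.ite measurableSet_Iio measurable_const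
    (Measurable.ite (measurableSet_Ioi (a := (0:ℝ))) measurable_const measurable_const)

lemma realSign_abs_le (r : ℝ) : |Real.sign r| ≤ 1 := by
  rcases lt_trichotomy r 0 with h | h | h
  · simp [Real.sign_of_neg h]
  · simp [h, Real.sign_zero]
  · simp [Real.sign_of_pos h]

lemma realSign_mul_self (r : ℝ) : Real.sign r * r = |r| := by
  rcases lt_trichotomy r 0 with h | h | h
  · rw [Real.sign_of_neg h, abs_of_neg h]; ring
  · simp [h]
  · rw [Real.sign_of_pos h, abs_of_pos h]; ring

/-- Lower bound for the extended relaxed energy: with `Q = u·C`,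
`Ẽ[C,Q] ≥ (1/2)|C|(X) + (1/(√2 c₀))|Q|(X)`. -/
theorem stmt19 {X : Type*} [MeasurableSpace X]
    (C : Measure X) [IsFiniteMeasure C] (c₀ : ℝ) (hc₀ : 0 < c₀)
    (u : X → ℝ) (hu : Integrable u C) (hum : Measurable u) :
    (((1 / 2) * (C Set.univ).toReal +
        (1 / (Real.sqrt 2 * c₀)) * ∫ x, |u x| ∂C : ℝ) : EReal) ≤
      sSup {e : EReal | ∃ a b : X → ℝ, Measurable a ∧ Measurable b ∧
        (∀ x, a x + (b x) ^ 2 / 2 ≤ 0) ∧ (∃ M : ℝ, ∀ x, |a x| ≤ M ∧ |b x| ≤ M) ∧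
        e = ((∫ x, (2 * c₀ ^ 2 * a x + 1) ∂C + ∫ x, b x * u x ∂C : ℝ) : EReal)} := by
  have hs2 : (0:ℝ) < Real.sqrt 2 := Real.sqrt_pos.2 (by norm_num)
  have hc2 : (0:ℝ) < c₀ ^ 2 := by positivity
  set a : X → ℝ := fun _ => -1 / (4 * c₀ ^ 2) with ha
  set b : X → ℝ := fun x => Real.sign (u x) / (Real.sqrt 2 * c₀) with hb
  apply le_sSup
  refine ⟨a, b, measurable_const, (measurable_realSign.comp hum).div measurable_const,
    ?_, ⟨1 / (4 * c₀ ^ 2) + 1 / (Real.sqrt 2 * c₀), ?_⟩, ?_⟩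
  · intro x
    have hs : (Real.sign (u x)) ^ 2 ≤ 1 := by
      nlinarith [realSign_abs_le (u x), sq_abs (Real.sign (u x)), abs_nonneg (Real.sign (u x))]
    have hb2 : (b x) ^ 2 ≤ 1 / (2 * c₀ ^ 2) := by
      have heq : (b x) ^ 2 = (Real.sign (u x)) ^ 2 / (2 * c₀ ^ 2) := by
        simp only [hb, div_pow, mul_pow]
        rw [Real.sq_sqrt (by norm_num : (0:ℝ) ≤ 2)]
      rw [heq]
      gcongr
    have hax : a x = -1 / (4 * c₀ ^ 2) := rfl
    have hhalf : 1 / (2 * c₀ ^ 2) / 2 = 1 / (4 * c₀ ^ 2) := by ring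
    rw [hax]
    have hq : b x ^ 2 / 2 ≤ 1 / (4 * c₀ ^ 2) := by
      rw [← hhalf]; linarith
    have hneg : -1 / (4 * c₀ ^ 2) = -(1 / (4 * c₀ ^ 2)) := by ring
    rw [hneg]; linarith
  · intro x
    have h1 : |a x| = 1 / (4 * c₀ ^ 2) := by
      show |(-1 : ℝ) / (4 * c₀ ^ 2)| = 1 / (4 * c₀ ^ 2)
      rw [abs_div, abs_neg, abs_one, abs_of_pos (by positivity : (0:ℝ) < 4 * c₀ ^ 2)]
    have h2 : |b x| ≤ 1 / (Real.sqrt 2 * c₀) := by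
      show |Real.sign (u x) / (Real.sqrt 2 * c₀)| ≤ 1 / (Real.sqrt 2 * c₀)
      rw [abs_div, abs_of_pos (by positivity : (0:ℝ) < Real.sqrt 2 * c₀)]
      gcongr
      exact realSign_abs_le (u x)
    have p1 : (0:ℝ) ≤ 1 / (4 * c₀ ^ 2) := by positivity
    have p2 : (0:ℝ) ≤ 1 / (Real.sqrt 2 * c₀) := by positivity
    constructor
    · rw [h1]; linarith
    · linarith
  · congr 1
    have h1 : ∫ x, (2 * c₀ ^ 2 * a x + 1) ∂C = (1 / 2) * (C Set.univ).toReal := by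
      have heq : (fun x => 2 * c₀ ^ 2 * a x + 1) = fun _ : X => (1 / 2 : ℝ) := by
        funext x
        show 2 * c₀ ^ 2 * (-1 / (4 * c₀ ^ 2)) + 1 = 1 / 2
        field_simp
        ring
      rw [heq, integral_const, smul_eq_mul, mul_comm]
      rfl
    have h2 : ∫ x, b x * u x ∂C = (1 / (Real.sqrt 2 * c₀)) * ∫ x, |u x| ∂C := by
      have heq : (fun x => b x * u x) = fun x => (1 / (Real.sqrt 2 * c₀)) * |u x| := by
        funext x
        show Real.sign (u x) / (Real.sqrt 2 * c₀) * u x = 1 / (Real.sqrt 2 * c₀) * |u x|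
        rw [← realSign_mul_self (u x)]
        ring
      rw [heq, integral_const_mul]
    rw [h1, h2]
end
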